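/- Let α be a positive transcendental real number. Let G be the additive subgroup of ℝ² generated by the set { q·(α^{2i}, α^{-2i}) : q ∈ ℚ, i ∈ ℤ } ∪ { (α^{2i+1}, α^{-2i-1}) : i ∈ ℤ } ∪ { (2^{1/3}·α^{2i+1}, 0) : i ∈ ℤ }. Then G is dense in ℝ². -/

import Mathlib

theorem stmt12 (α : ℝ) (hα : 0 < α) (htr : Transcendental ℚ α) :
    Dense ((AddSubgroup.closure
        ({v | ∃ q : ℚ, ∃ i : ℤ, v = (q : ℝ) • ![α ^ (2 * i), α ^ (-(2 * i))]} ∪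
         {v | ∃ i : ℤ, v = ![α ^ (2 * i + 1), α ^ (-(2 * i) - 1)]} ∪
         {v | ∃ i : ℤ, v = ![(2 : ℝ) ^ ((1 : ℝ) / 3) * α ^ (2 * i + 1), 0]}) :
        AddSubgroup (EuclideanSpace ℝ (Fin 2))) : Set (EuclideanSpace ℝ (Fin 2))) := by
  have hα1 : α ≠ 1 := fun h => htr (h ▸ isAlgebraic_one)
  set β : ℝ := α ^ 2 with hβdef
  have hβ0 : (0:ℝ) < β := by positivity
  have hβ1 : β ≠ 1 := by
    intro h
    have h2 : (α - 1) * (α + 1) = 0 := by nlinarith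
    rcases mul_eq_zero.1 h2 with h' | h'
    · exact hα1 (by linarith)
    · linarith
  have hβne : β ≠ 0 := ne_of_gt hβ0
  have hden : β - β⁻¹ ≠ 0 := by
    intro h
    apply hβ1
    have : β * β = 1 := by
      field_simp at h
      nlinarith [h]
    nlinarith
  set v0 : EuclideanSpace ℝ (Fin 2) := WithLp.toLp 2 ![(1:ℝ), 1] with hv0
  set v1 : EuclideanSpace ℝ (Fin 2) := WithLp.toLp 2 ![β, β⁻¹] with hv1
  rw [Metric.dense_iff]
  intro x ε hε
  set b : ℝ := (x 0 - x 1) / (β - β⁻¹) with hbdef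
  set a : ℝ := x 0 - b * β with hadef
  have hb : b * (β - β⁻¹) = x 0 - x 1 := div_mul_cancel₀ _ hden
  have hb' : b * β - b * β⁻¹ = x 0 - x 1 := by rw [← mul_sub]; exact hb
  have hx : x = a • v0 + b • v1 := by
    ext i
    fin_cases i
    · show x 0 = a * 1 + b * β
      rw [hadef]; ring
    · show x 1 = a * 1 + b * β⁻¹
      rw [hadef]; linarith
  set C : ℝ := ‖v0‖ + ‖v1‖ + 1 with hC
  have hC0 : (0:ℝ) < C := by positivity
  set δ : ℝ := ε / C with hδdef
  have hδ0 : (0:ℝ) < δ := by positivity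
  obtain ⟨q, hq⟩ := exists_rat_near a hδ0
  obtain ⟨r, hr⟩ := exists_rat_near b hδ0
  refine ⟨(q:ℝ) • v0 + (r:ℝ) • v1, ?_, ?_⟩
  · -- in ball
    rw [Metric.mem_ball, dist_eq_norm]
    have heq : (q:ℝ) • v0 + (r:ℝ) • v1 - x = ((q:ℝ) - a) • v0 + ((r:ℝ) - b) • v1 := by
      rw [hx]; module
    rw [heq]
    calc ‖((q:ℝ) - a) • v0 + ((r:ℝ) - b) • v1‖
        ≤ ‖((q:ℝ) - a) • v0‖ + ‖((r:ℝ) - b) • v1‖ := norm_add_le _ _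
      _ = |(q:ℝ) - a| * ‖v0‖ + |(r:ℝ) - b| * ‖v1‖ := by
          rw [norm_smul, norm_smul, Real.norm_eq_abs, Real.norm_eq_abs]
      _ ≤ δ * ‖v0‖ + δ * ‖v1‖ := by
          gcongr
          · exact le_of_lt (by rwa [abs_sub_comm] at hq)
          · exact le_of_lt (by rwa [abs_sub_comm] at hr)
      _ < δ * C := by nlinarith [norm_nonneg v0, norm_nonneg v1]
      _ = ε := by rw [hδdef]; exact div_mul_cancel₀ ε hC0.ne'
  · -- membership in closure
    apply AddSubgroup.add_mem
    · apply AddSubgroup.subset_closure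
      left; left
      refine ⟨q, 0, ?_⟩
      have h0 : (![α ^ (2 * (0:ℤ)), α ^ (-(2 * (0:ℤ)))] : Fin 2 → ℝ) = v0.ofLp := by
        rw [hv0]; norm_num
      rw [h0]; rfl
    · apply AddSubgroup.subset_closure
      left; left
      refine ⟨r, 1, ?_⟩
      have h1 : α ^ (2 * (1:ℤ)) = β := by
        rw [hβdef, show (2 * (1:ℤ)) = ((2:ℕ):ℤ) by norm_num, zpow_natCast]
      have h2 : α ^ (-(2 * (1:ℤ))) = β⁻¹ := by
        rw [zpow_neg, h1]
      rw [hv1, h1, h2]; rfl
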